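/- Let Λ be a ℤ/2-graded-commutative ring (odd elements anticommute pairwise and square to zero, even elements are central) and let C be an n×n matrix all of whose entries lie in the odd part of Λ. Then the trace of every even power of C vanishes: tr(C^{2m}) = 0 for all m ≥ 1. -/

import Mathlib

section WalkTraceAux
open Fin.NatCast Fin.CommRing
variable {Λ : Type*} [Ring Λ] {Λ₁ : AddSubgroup Λ}

lemma odd_mul_list' (hanti : ∀ a ∈ Λ₁, ∀ b ∈ Λ₁, a * b = -(b * a))
    {a : Λ} (ha : a ∈ Λ₁) :
    ∀ l : List Λ, (∀ b ∈ l, b ∈ Λ₁) → a * l.prod = (-1) ^ l.length * (l.prod * a) := by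
  intro l
  induction l with
  | nil => simp
  | cons b r ih =>
    intro h
    have hb : b ∈ Λ₁ := h b List.mem_cons_self
    have hr : ∀ x ∈ r, x ∈ Λ₁ := fun x hx => h x (List.mem_cons_of_mem _ hx)
    have h1 : a * b = -(b * a) := hanti a ha b hb
    have h2 := ih hr
    simp only [List.prod_cons, List.length_cons]
    set p := r.prod with hp
    rcases Nat.even_or_odd r.length with hk | hk
    · rw [hk.neg_one_pow, one_mul] at h2
      rw [(hk.add_one).neg_one_pow, neg_one_mul]
      calc a * (b * p) = (a * b) * p := (mul_assoc _ _ _).symm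
        _ = -(b * a) * p := by rw [h1]
        _ = -(b * (a * p)) := by rw [neg_mul, mul_assoc]
        _ = -(b * (p * a)) := by rw [h2]
        _ = -(b * p * a) := by rw [mul_assoc]
    · rw [hk.neg_one_pow, neg_one_mul] at h2
      rw [(hk.add_one).neg_one_pow, one_mul]
      calc a * (b * p) = (a * b) * p := (mul_assoc _ _ _).symm
        _ = -(b * a) * p := by rw [h1]
        _ = -(b * (a * p)) := by rw [neg_mul, mul_assoc]
        _ = -(b * -(p * a)) := by rw [h2]
        _ = b * p * a := by rw [mul_neg, neg_neg, mul_assoc]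

lemma list_prod_sq' (hanti : ∀ a ∈ Λ₁, ∀ b ∈ Λ₁, a * b = -(b * a))
    (hsq : ∀ a ∈ Λ₁, a * a = 0) (l : List Λ) (hne : l ≠ [])
    (h : ∀ b ∈ l, b ∈ Λ₁) : l.prod * l.prod = 0 := by
  obtain ⟨a, r, rfl⟩ := List.exists_cons_of_ne_nil hne
  have ha : a ∈ Λ₁ := h a List.mem_cons_self
  have hr : ∀ x ∈ r, x ∈ Λ₁ := fun x hx => h x (List.mem_cons_of_mem _ hx)
  have h2 := odd_mul_list' hanti ha r hr
  have ha2 : a * a = 0 := hsq a ha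
  simp only [List.prod_cons]
  set p := r.prod with hp
  rcases Nat.even_or_odd r.length with hk | hk
  · rw [hk.neg_one_pow, one_mul] at h2
    calc (a * p) * (a * p) = a * ((p * a) * p) := by rw [mul_assoc, mul_assoc]
      _ = a * ((a * p) * p) := by rw [← h2]
      _ = (a * a) * (p * p) := by simp only [mul_assoc]
      _ = 0 := by rw [ha2, zero_mul]
  · rw [hk.neg_one_pow, neg_one_mul] at h2
    have h2' : p * a = -(a * p) := by rw [← neg_neg (p * a), ← h2]
    calc (a * p) * (a * p) = a * ((p * a) * p) := by rw [mul_assoc, mul_assoc]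
      _ = a * (-(a * p) * p) := by rw [h2']
      _ = -((a * a) * (p * p)) := by simp only [mul_assoc, neg_mul, mul_neg]
      _ = 0 := by rw [ha2, zero_mul, neg_zero]

variable {n : ℕ} (C : Matrix (Fin n) (Fin n) Λ)

def wlkp : Fin n → List (Fin n) → Fin n → Λ
  | i, [], j => C i j
  | i, a :: l, j => C i a * wlkp a l j

lemma pow_apply_eq_sum_wlkp : ∀ (k : ℕ) (i j : Fin n),
    (C ^ (k + 1)) i j = ∑ w : Fin k → Fin n, wlkp C i (List.ofFn w) j := by
  intro k
  induction k with
  | zero =>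
    intro i j
    rw [pow_one]
    rw [Fintype.sum_eq_single (fun x : Fin 0 => x.elim0) (fun w h => absurd (funext fun x => x.elim0) h)]
    · simp [wlkp]
  | succ k ih =>
    intro i j
    rw [pow_succ', Matrix.mul_apply]
    have h1 : ∀ a, C i a * (C ^ (k+1)) a j = ∑ w : Fin k → Fin n, C i a * wlkp C a (List.ofFn w) j := by
      intro a; rw [ih, Finset.mul_sum]
    rw [Finset.sum_congr rfl (fun a _ => h1 a), ← Fintype.sum_prod_type']
    apply Fintype.sum_equiv (Fin.consEquiv (fun _ => Fin n))
    rintro ⟨a, w⟩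
    rw [List.ofFn_succ]
    simp only [Fin.consEquiv_apply, Fin.cons_zero, Fin.cons_succ]
    rfl

lemma wlkp_eq_range' : ∀ (k : ℕ) (v : ℕ → Fin n) (j : Fin n),
    wlkp C (v 0) (List.ofFn (fun s : Fin k => v (s + 1))) j
      = ((List.range k).map (fun s : ℕ => C (v s) (v (s + 1)))).prod * C (v k) j := by
  intro k
  induction k with
  | zero => intro v j; simp [wlkp]
  | succ k ih =>
    intro v j
    have key := ih (fun x => v (x + 1)) j
    rw [List.ofFn_succ]
    simp only [Fin.val_zero, Fin.val_succ, zero_add] at *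
    show wlkp C (v 0) (v 1 :: List.ofFn fun s : Fin k => v (s + 1 + 1)) j = _
    rw [show (wlkp C (v 0) (v 1 :: List.ofFn fun s : Fin k => v (s + 1 + 1)) j)
        = C (v 0) (v 1) * wlkp C (v 1) (List.ofFn fun s : Fin k => v (s + 1 + 1)) j from rfl]
    rw [key, List.range_succ_eq_map, List.map_cons, List.prod_cons, List.map_map]
    rw [mul_assoc]
    rfl

def TT {L : ℕ} [NeZero L] (u : Fin L → Fin n) : Λ :=
  ((List.range L).map (fun s : ℕ => C (u ((s : ℕ) : Fin L)) (u ((s + 1 : ℕ) : Fin L)))).prod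

lemma finCast_lt {L : ℕ} [NeZero L] (a : ℕ) (h : a < L) : ((a : ℕ) : Fin L) = ⟨a, h⟩ := by
  apply Fin.ext
  rw [Fin.val_natCast, Nat.mod_eq_of_lt h]

lemma trace_eq_sum_TT (K : ℕ) :
    Matrix.trace (C ^ (K + 1)) = ∑ u : Fin (K + 1) → Fin n, TT C u := by
  rw [Matrix.trace]
  simp only [Matrix.diag]
  have h1 : ∀ i : Fin n, (C ^ (K + 1)) i i = ∑ w : Fin K → Fin n, wlkp C i (List.ofFn w) i :=
    fun i => pow_apply_eq_sum_wlkp C K i i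
  rw [Finset.sum_congr rfl (fun i _ => h1 i), ← Fintype.sum_prod_type']
  apply Fintype.sum_equiv (Fin.consEquiv (fun _ => Fin n))
  rintro ⟨i, w⟩
  show wlkp C i (List.ofFn w) i = TT C (Fin.cons i w)
  set u : Fin (K + 1) → Fin n := Fin.cons i w with hu
  have hcast : ∀ s : Fin K, (((s : ℕ) + 1 : ℕ) : Fin (K + 1)) = Fin.succ s := by
    intro s
    apply Fin.ext
    rw [Fin.val_natCast, Nat.mod_eq_of_lt (by omega), Fin.val_succ]
  have hu0 : u ((0 : ℕ) : Fin (K + 1)) = i := by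
    rw [Nat.cast_zero, hu]; exact Fin.cons_zero _ _
  have hv : ∀ s : Fin K, u (((s : ℕ) + 1 : ℕ) : Fin (K + 1)) = w s := by
    intro s; rw [hcast, hu]; exact Fin.cons_succ _ _ _
  have key := wlkp_eq_range' C K (fun s : ℕ => u ((s : ℕ) : Fin (K + 1))) (u ((0:ℕ) : Fin (K+1)))
  have hofn : List.ofFn w = List.ofFn (fun s : Fin K => u (((s : ℕ) + 1 : ℕ) : Fin (K + 1))) := by
    congr 1; funext s; exact (hv s).symm
  rw [hofn, ← hu0, key]
  rw [TT, List.range_succ, List.map_append, List.prod_append]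
  simp only [List.map_cons, List.map_nil, List.prod_cons, List.prod_nil, mul_one]
  congr 2
  rw [Fin.natCast_self, Nat.cast_zero]

def shf {K : ℕ} (u : Fin (K + 1) → Fin n) : Fin (K + 1) → Fin n := fun x => u (x + 1)

variable {K : ℕ}

lemma cast_succ_fin (K : ℕ) (s : ℕ) : ((s + 1 : ℕ) : Fin (K + 1)) = ((s : ℕ) : Fin (K + 1)) + 1 := by
  push_cast; ring

lemma shf_iter_eq (j : ℕ) (u : Fin (K + 1) → Fin n) :
    shf^[j] u = fun x => u (x + (j : Fin (K + 1))) := by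
  induction j with
  | zero => simp
  | succ j ih =>
    rw [Function.iterate_succ_apply', ih]
    funext x
    show u (x + 1 + (j : Fin (K+1))) = u (x + ((j+1 : ℕ) : Fin (K+1)))
    congr 1
    rw [cast_succ_fin]
    ring

lemma shf_per (u : Fin (K + 1) → Fin n) : shf^[K + 1] u = u := by
  rw [shf_iter_eq]
  funext x
  rw [Fin.natCast_self, add_zero]

variable (hanti : ∀ a ∈ Λ₁, ∀ b ∈ Λ₁, a * b = -(b * a))
  (hsq : ∀ a ∈ Λ₁, a * a = 0) (hC : ∀ i j, C i j ∈ Λ₁)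

include hanti hC in
lemma TT_shf (hK : Odd K) (u : Fin (K + 1) → Fin n) : TT C (shf u) = - TT C u := by
  set f : ℕ → Λ := fun s : ℕ => C (u ((s : ℕ) : Fin (K+1))) (u ((s + 1 : ℕ) : Fin (K+1))) with hf
  set R : Λ := ((List.range K).map (f ∘ Nat.succ)).prod with hR
  have hTu : TT C u = f 0 * R := by
    rw [TT, List.range_succ_eq_map, List.map_cons, List.prod_cons, List.map_map]
  have hTs : TT C (shf u) = R * f 0 := by
    rw [TT, List.range_succ, List.map_append, List.prod_append]
    congr 1
    · congr 1
      apply List.map_congr_left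
      intro s _
      simp only [shf, Function.comp_apply, hf, Nat.succ_eq_add_one]
      rw [← cast_succ_fin, ← cast_succ_fin]
    · simp only [List.map_cons, List.map_nil, List.prod_cons, List.prod_nil, mul_one]
      simp only [shf, hf]
      rw [← cast_succ_fin, Fin.natCast_self]
      norm_num
  have hmem : ∀ b ∈ (List.range K).map (f ∘ Nat.succ), b ∈ Λ₁ := by
    intro b hb
    obtain ⟨s, _, rfl⟩ := List.mem_map.mp hb
    exact hC _ _
  have hlen : ((List.range K).map (f ∘ Nat.succ)).length = K := by simp
  have hf0 : f 0 ∈ Λ₁ := hC _ _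
  have key := odd_mul_list' hanti hf0 _ hmem
  rw [hlen, hK.neg_one_pow, neg_one_mul, ← hR] at key
  rw [hTs, hTu, key, neg_neg]

include hanti hC in
lemma TT_shf_iter (hK : Odd K) (u : Fin (K + 1) → Fin n) (j : ℕ) :
    TT C (shf^[j] u) = (-1) ^ j * TT C u := by
  induction j with
  | zero => simp
  | succ j ih =>
    rw [Function.iterate_succ_apply', TT_shf C hanti hC hK, ih, pow_succ]
    simp only [mul_assoc, mul_neg_one, neg_mul, mul_neg, one_mul]

include hanti hsq hC in
lemma TT_periodic_odd (hK : Odd K) (u : Fin (K + 1) → Fin n) (d : ℕ) (hd : 0 < d)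
    (hodd : Odd d) (hdvd : d ∣ K + 1) (hper : shf^[d] u = u) : TT C u = 0 := by
  set g : ℕ → Λ := fun s : ℕ => C (u ((s : ℕ) : Fin (K+1))) (u ((s + 1 : ℕ) : Fin (K+1))) with hg
  have hux : ∀ x : Fin (K+1), u (x + (d : Fin (K+1))) = u x := by
    intro x
    conv_rhs => rw [← hper, shf_iter_eq]
  have hgper : ∀ s : ℕ, g (d + s) = g s := by
    intro s
    rw [hg]
    simp only []
    congr 1
    · rw [show ((d + s : ℕ) : Fin (K+1)) = ((s : ℕ) : Fin (K+1)) + (d : Fin (K+1)) by push_cast; ring]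
      exact hux _
    · rw [show ((d + s + 1 : ℕ) : Fin (K+1)) = ((s + 1 : ℕ) : Fin (K+1)) + (d : Fin (K+1)) by push_cast; ring]
      exact hux _
  set B : Λ := ((List.range d).map g).prod with hB
  have block : ∀ e : ℕ, ((List.range (e * d)).map g).prod = B ^ e := by
    intro e
    induction e with
    | zero => simp
    | succ e ih =>
      rw [show (e + 1) * d = d + e * d by ring, List.range_add, List.map_append,
        List.prod_append, List.map_map]
      have : (List.range (e * d)).map (g ∘ (fun x => d + x)) = (List.range (e * d)).map g := by
        apply List.map_congr_left
        intro s _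
        exact hgper s
      rw [this, ih, pow_succ']
  obtain ⟨e, he⟩ := hdvd
  rw [mul_comm] at he
  have hTB : TT C u = B ^ e := by rw [TT, ← hg, he, block]
  have heven : Even e := by
    rcases Nat.even_or_odd e with h | h
    · exact h
    · exfalso
      have : Odd (e * d) := h.mul hodd
      rw [← he] at this
      rcases hK with ⟨k, hk⟩
      rcases this with ⟨k', hk'⟩
      omega
  have he2 : 2 ≤ e := by
    rcases heven with ⟨k, hk⟩
    have : e ≠ 0 := by rintro rfl; omega
    omega
  have hBB : B * B = 0 := by
    apply list_prod_sq' hanti hsq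
    · have : List.range d ≠ [] := by
        simp [List.range_eq_nil]
        omega
      simp [List.map_eq_nil_iff]
      omega
    · intro b hb
      obtain ⟨s, _, rfl⟩ := List.mem_map.mp hb
      exact hC _ _
  rw [hTB, show e = 2 + (e - 2) by omega, pow_add, pow_two, hBB, zero_mul]

end WalkTraceAux
/-- In a ℤ/2-graded-commutative (supercommutative) ring `Λ = Λ₀ ⊕ Λ₁` (even part central,
odd elements pairwise anticommuting and squaring to zero), the trace of every even power of
a matrix `C` with odd entries vanishes: `tr (C^(2m)) = 0` for all `m ≥ 1`. -/
theorem stmt_2 {Λ : Type*} [Ring Λ] (Λ₀ Λ₁ : AddSubgroup Λ)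
    (hcentral : ∀ a ∈ Λ₀, ∀ b : Λ, a * b = b * a)
    (hanti : ∀ a ∈ Λ₁, ∀ b ∈ Λ₁, a * b = -(b * a))
    (hsq : ∀ a ∈ Λ₁, a * a = 0)
    (hdecomp : ∀ x : Λ, ∃ a ∈ Λ₀, ∃ b ∈ Λ₁, x = a + b)
    (hdisj : Λ₀ ⊓ Λ₁ = ⊥)
    {n : ℕ} (C : Matrix (Fin n) (Fin n) Λ)
    (hC : ∀ i j, C i j ∈ Λ₁) :
    ∀ m : ℕ, 1 ≤ m → Matrix.trace (C ^ (2 * m)) = 0 := by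
  intro m hm
  classical
  obtain ⟨K, hK⟩ : ∃ K, 2 * m = K + 1 := ⟨2 * m - 1, by omega⟩
  have hKodd : Odd K := ⟨m - 1, by omega⟩
  rw [hK, trace_eq_sum_TT C K]
  have hperAll : ∀ u : Fin (K + 1) → Fin n, Function.IsPeriodicPt shf (K + 1) u :=
    fun u => shf_per u
  set d : (Fin (K + 1) → Fin n) → ℕ := fun u => Function.minimalPeriod shf u with hd
  have hdpos : ∀ u, 0 < d u := fun u => (hperAll u).minimalPeriod_pos (by omega)
  have hddvd : ∀ u, d u ∣ K + 1 := fun u => (hperAll u).minimalPeriod_dvd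
  set Orb : (Fin (K + 1) → Fin n) → Finset (Fin (K + 1) → Fin n) :=
    fun u => Finset.univ.filter (fun v => ∃ j : ℕ, v = shf^[j] u) with hOrb
  have hOrbMem : ∀ u, u ∈ Orb u := fun u => Finset.mem_filter.mpr ⟨Finset.mem_univ _, 0, rfl⟩
  have hOrbEq : ∀ u v, v ∈ Orb u → Orb v = Orb u := by
    intro u v hv
    obtain ⟨-, j, rfl⟩ := Finset.mem_filter.mp hv
    ext w
    simp only [hOrb, Finset.mem_filter, Finset.mem_univ, true_and]
    constructor
    · rintro ⟨k, rfl⟩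
      exact ⟨k + j, by rw [Function.iterate_add_apply]⟩
    · rintro ⟨k, rfl⟩
      have h1 : shf^[j] u = shf^[j % (K + 1)] u := ((hperAll u).iterate_mod_apply j).symm
      have h2 : shf^[(K + 1) - j % (K + 1)] (shf^[j] u) = u := by
        rw [h1, ← Function.iterate_add_apply]
        have h3 : (K + 1) - j % (K + 1) + j % (K + 1) = K + 1 := by
          have := Nat.mod_lt j (show 0 < K + 1 by omega)
          omega
        rw [h3]
        exact shf_per u
      exact ⟨k + ((K + 1) - j % (K + 1)), by rw [Function.iterate_add_apply, h2]⟩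
  have hfib : ∀ u, Finset.univ.filter (fun v => Orb v = Orb u) = Orb u := by
    intro u
    ext v
    simp only [Finset.mem_filter, Finset.mem_univ, true_and]
    constructor
    · intro h
      rw [← h]
      exact hOrbMem v
    · exact hOrbEq u v
  have hOrbImage : ∀ u, Orb u = (Finset.range (d u)).image (fun j => shf^[j] u) := by
    intro u
    ext v
    simp only [hOrb, Finset.mem_filter, Finset.mem_univ, true_and, Finset.mem_image,
      Finset.mem_range]
    constructor
    · rintro ⟨j, rfl⟩
      exact ⟨j % d u, Nat.mod_lt _ (hdpos u),
        ((Function.isPeriodicPt_minimalPeriod shf u).iterate_mod_apply j)⟩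
    · rintro ⟨j, -, rfl⟩
      exact ⟨j, rfl⟩
  rw [← Finset.sum_fiberwise_of_maps_to
    (fun u _ => Finset.mem_image_of_mem Orb (Finset.mem_univ u)) (TT C)]
  apply Finset.sum_eq_zero
  intro O hO
  obtain ⟨u, -, rfl⟩ := Finset.mem_image.mp hO
  rw [hfib u, hOrbImage u, Finset.sum_image (fun a ha b hb hab =>
    Function.iterate_injOn_Iio_minimalPeriod (Finset.mem_range.mp ha)
      (Finset.mem_range.mp hb) hab)]
  have hterm : ∀ j, TT C (shf^[j] u) = (-1) ^ j * TT C u := TT_shf_iter C hanti hC hKodd u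
  rw [Finset.sum_congr rfl (fun j _ => hterm j), ← Finset.sum_mul]
  rcases Nat.even_or_odd (d u) with hpar | hpar
  · rw [neg_one_geom_sum, if_pos hpar, zero_mul]
  · rw [TT_periodic_odd C hanti hsq hC hKodd u (d u) (hdpos u) hpar (hddvd u)
      (Function.isPeriodicPt_minimalPeriod shf u), mul_zero]
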